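/- Let n, p ≥ 1, let X_1, …, X_n ∈ ℝ^p, let ε ∈ ℝ^n with ∑_{i=1}^n ε_i² > 0, let σ > 0 and β₀ ∈ ℝ^p, and set Y_i = X_iᵀβ₀ + σε_i. Define Q̂(β) = (1/n)∑_{i=1}^n (Y_i − X_iᵀβ)², the prediction norm ‖δ‖_{2,n} = √((1/n)∑_{i=1}^n (X_iᵀδ)²), and the score S̃ = ((1/n)∑_{i=1}^n X_i ε_i) / √((1/n)∑_{i=1}^n ε_i²). Suppose c > 1 and λ > 0 satisfy λ ≥ c·n·‖S̃‖₂, suppose κ > 0 satisfies κ‖δ‖₂ ≤ ‖δ‖_{2,n} for all δ ∈ ℝ^p, and suppose (λ/n)² < κ². Then any minimizer β̂ of β ↦ √(Q̂(β)) + (λ/n)√(‖β‖² + 1) over ℝ^p satisfies ‖β̂ − β₀‖₂ ≤ 2(1/c + 1)(λ/n)√(Q̂(β₀)) / (κ² − (λ/n)²), where √(Q̂(β₀)) = σ√((1/n)∑_{i=1}^n ε_i²). -/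

import Mathlib

open Matrix

private lemma sqrt_lip {p : ℕ} (a b : Fin p → ℝ) :
    Real.sqrt ((∑ j, a j ^ 2) + 1) ≤
      Real.sqrt ((∑ j, b j ^ 2) + 1) + Real.sqrt (∑ j, (a j - b j) ^ 2) := by
  have hb : (0:ℝ) ≤ ∑ j, b j ^ 2 := Finset.sum_nonneg fun _ _ => sq_nonneg _
  have hcs : ∑ j, b j * (a j - b j) ≤
      Real.sqrt (∑ j, b j ^ 2) * Real.sqrt (∑ j, (a j - b j) ^ 2) :=
    Real.sum_mul_le_sqrt_mul_sqrt _ _ _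
  have h1 : Real.sqrt (∑ j, b j ^ 2) ≤ Real.sqrt ((∑ j, b j ^ 2) + 1) :=
    Real.sqrt_le_sqrt (by linarith)
  have hN : (0:ℝ) ≤ Real.sqrt (∑ j, (a j - b j) ^ 2) := Real.sqrt_nonneg _
  have key : (∑ j, a j ^ 2) + 1 ≤
      (Real.sqrt ((∑ j, b j ^ 2) + 1) + Real.sqrt (∑ j, (a j - b j) ^ 2)) ^ 2 := by
    have hexp : (∑ j, a j ^ 2) =
        (∑ j, b j ^ 2) + 2 * ∑ j, b j * (a j - b j) + ∑ j, (a j - b j) ^ 2 := by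
      rw [Finset.mul_sum, ← Finset.sum_add_distrib, ← Finset.sum_add_distrib]
      exact Finset.sum_congr rfl fun j _ => by ring
    have hsq1 : Real.sqrt ((∑ j, b j ^ 2) + 1) ^ 2 = (∑ j, b j ^ 2) + 1 :=
      Real.sq_sqrt (by linarith)
    have hsq2 : Real.sqrt (∑ j, (a j - b j) ^ 2) ^ 2 = ∑ j, (a j - b j) ^ 2 :=
      Real.sq_sqrt (Finset.sum_nonneg fun _ _ => sq_nonneg _)
    nlinarith [mul_le_mul_of_nonneg_right h1 hN]
  calc Real.sqrt ((∑ j, a j ^ 2) + 1) ≤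
      Real.sqrt ((Real.sqrt ((∑ j, b j ^ 2) + 1) + Real.sqrt (∑ j, (a j - b j) ^ 2)) ^ 2) :=
        Real.sqrt_le_sqrt key
    _ = _ := Real.sqrt_sq (by positivity)

set_option maxHeartbeats 1000000

/-- Deterministic estimation error bound for the square-root ridge
estimator: if `λ ≥ cn‖S̃‖₂`, `κ‖δ‖₂ ≤ ‖δ‖_{2,n}` for all `δ` and `(λ/n)² < κ²`, then any
minimizer `β̂` of `β ↦ √(Q̂(β)) + (λ/n)√(‖β‖²+1)` satisfies
`‖β̂ − β₀‖₂ ≤ 2(1/c+1)(λ/n)√(Q̂(β₀))/(κ² − (λ/n)²)`,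
with `√(Q̂(β₀)) = σ√((1/n)∑εᵢ²)`. -/
theorem stmt_8 (n p : ℕ) (hn : 1 ≤ n) (hp : 1 ≤ p)
    (X : Fin n → Fin p → ℝ) (ε : Fin n → ℝ) (hε : 0 < ∑ i, ε i ^ 2)
    (σ : ℝ) (hσ : 0 < σ) (β₀ : Fin p → ℝ)
    (Y : Fin n → ℝ) (hY : ∀ i, Y i = X i ⬝ᵥ β₀ + σ * ε i)
    (c lam κ : ℝ) (hc : 1 < c) (hlam : 0 < lam)
    (hscore : c * n * Real.sqrt (∑ j,
        ((∑ i, X i j * ε i) / n / Real.sqrt ((∑ i, ε i ^ 2) / n)) ^ 2) ≤ lam)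
    (hκ : 0 < κ)
    (hκle : ∀ δ : Fin p → ℝ,
      κ * Real.sqrt (∑ j, δ j ^ 2) ≤ Real.sqrt ((∑ i, (X i ⬝ᵥ δ) ^ 2) / n))
    (hsmall : (lam / n) ^ 2 < κ ^ 2)
    (βhat : Fin p → ℝ)
    (hmin : ∀ b : Fin p → ℝ,
      Real.sqrt ((∑ i, (Y i - X i ⬝ᵥ βhat) ^ 2) / n) +
          lam / n * Real.sqrt ((∑ j, βhat j ^ 2) + 1) ≤
        Real.sqrt ((∑ i, (Y i - X i ⬝ᵥ b) ^ 2) / n) +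
          lam / n * Real.sqrt ((∑ j, b j ^ 2) + 1)) :
    Real.sqrt (∑ j, (βhat j - β₀ j) ^ 2) ≤
        2 * (1 / c + 1) * (lam / n) * Real.sqrt ((∑ i, (Y i - X i ⬝ᵥ β₀) ^ 2) / n) /
          (κ ^ 2 - (lam / n) ^ 2) ∧
      Real.sqrt ((∑ i, (Y i - X i ⬝ᵥ β₀) ^ 2) / n) = σ * Real.sqrt ((∑ i, ε i ^ 2) / n) := by
  have hn0 : (0:ℝ) < n := by exact_mod_cast hn
  set E : ℝ := (∑ i, ε i ^ 2) / n with hE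
  have hEpos : 0 < E := div_pos hε hn0
  have hsE : 0 < Real.sqrt E := Real.sqrt_pos.2 hEpos
  -- residual at β₀
  have hres0 : ∀ i, Y i - X i ⬝ᵥ β₀ = σ * ε i := fun i => by rw [hY i]; ring
  -- second conjunct
  have hsecond : Real.sqrt ((∑ i, (Y i - X i ⬝ᵥ β₀) ^ 2) / n)
      = σ * Real.sqrt ((∑ i, ε i ^ 2) / n) := by
    have : (∑ i, (Y i - X i ⬝ᵥ β₀) ^ 2) / n = σ ^ 2 * E := by
      rw [hE]
      rw [show (∑ i, (Y i - X i ⬝ᵥ β₀) ^ 2) = σ ^ 2 * ∑ i, ε i ^ 2 by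
        rw [Finset.mul_sum]; exact Finset.sum_congr rfl fun i _ => by rw [hres0 i]; ring]
      ring
    rw [this, Real.sqrt_mul (sq_nonneg σ), Real.sqrt_sq hσ.le, hE]
  set f₀ : ℝ := Real.sqrt ((∑ i, (Y i - X i ⬝ᵥ β₀) ^ 2) / n) with hf₀
  have hf₀pos : 0 < f₀ := by
    rw [hsecond]; exact mul_pos hσ (Real.sqrt_pos.2 (div_pos hε hn0))
  have hf₀E : f₀ = σ * Real.sqrt E := by rw [hsecond, hE]
  have hEne : Real.sqrt E ≠ 0 := hsE.ne'
  have hnne : (n:ℝ) ≠ 0 := hn0.ne'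
  set d : Fin p → ℝ := fun j => βhat j - β₀ j with hd
  set D : ℝ := Real.sqrt (∑ j, d j ^ 2) with hD
  have hDnn : 0 ≤ D := Real.sqrt_nonneg _
  set S : Fin p → ℝ := fun j => (∑ i, X i j * ε i) / n / Real.sqrt E with hS
  set s : ℝ := Real.sqrt (∑ j, S j ^ 2) with hs
  have hsnn : 0 ≤ s := Real.sqrt_nonneg _
  set L : ℝ := lam / n with hL
  have hLpos : 0 < L := div_pos hlam hn0
  -- score bound : s ≤ L / c
  have hsL : s ≤ L / c := by
    rw [hL, div_div]
    rw [le_div_iff₀ (by positivity)]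
    calc s * (n * c) = c * n * s := by ring
      _ ≤ lam := hscore
  -- κD ≤ sqrt T, T = ∑(X⬝d)²/n
  set T : ℝ := (∑ i, (X i ⬝ᵥ d) ^ 2) / n with hT
  have hTnn : 0 ≤ T := by positivity
  have hκD : κ ^ 2 * D ^ 2 ≤ T := by
    have := hκle d
    rw [← hD, ← hT] at this
    nlinarith [Real.sq_sqrt hTnn, Real.sqrt_nonneg T, mul_nonneg hκ.le hDnn]
  set fh : ℝ := Real.sqrt ((∑ i, (Y i - X i ⬝ᵥ βhat) ^ 2) / n) with hfh
  have hfhnn : 0 ≤ fh := Real.sqrt_nonneg _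
  -- decomposition: fh² = f₀² - 2 f₀ (S·d) + T
  have hresh : ∀ i, Y i - X i ⬝ᵥ βhat = σ * ε i - X i ⬝ᵥ d := by
    intro i
    have : X i ⬝ᵥ d = X i ⬝ᵥ βhat - X i ⬝ᵥ β₀ := by
      simp only [hd, dotProduct, Finset.sum_sub_distrib, mul_sub]
    rw [hY i, this]; ring
  have hSd : f₀ * ∑ j, S j * d j = σ / n * ∑ i, ε i * (X i ⬝ᵥ d) := by
    have hswap : ∑ i, ε i * (X i ⬝ᵥ d) = ∑ j, (∑ i, X i j * ε i) * d j := by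
      simp only [dotProduct, Finset.mul_sum, Finset.sum_mul]
      rw [Finset.sum_comm]
      exact Finset.sum_congr rfl fun j _ => Finset.sum_congr rfl fun i _ => by ring
    rw [hswap, hf₀E, Finset.mul_sum, Finset.mul_sum]
    refine Finset.sum_congr rfl fun j _ => ?_
    simp only [hS]
    field_simp
  have hdecomp : fh ^ 2 = f₀ ^ 2 - 2 * (f₀ * ∑ j, S j * d j) + T := by
    have h1 : fh ^ 2 = (∑ i, (Y i - X i ⬝ᵥ βhat) ^ 2) / n :=
      Real.sq_sqrt (by positivity)
    have h2 : f₀ ^ 2 = (∑ i, (Y i - X i ⬝ᵥ β₀) ^ 2) / n :=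
      Real.sq_sqrt (by positivity)
    rw [h1, h2, hSd, hT]
    have hsum : ∑ i, (Y i - X i ⬝ᵥ βhat) ^ 2
        = (∑ i, (Y i - X i ⬝ᵥ β₀) ^ 2) - 2 * σ * (∑ i, ε i * (X i ⬝ᵥ d))
          + ∑ i, (X i ⬝ᵥ d) ^ 2 := by
      rw [Finset.mul_sum, ← Finset.sum_sub_distrib, ← Finset.sum_add_distrib]
      refine Finset.sum_congr rfl fun i _ => ?_
      rw [hresh i, hres0 i]; ring
    rw [hsum]; field_simp
  -- minimality: fh ≤ f₀ + L * D
  have hfhle : fh ≤ f₀ + L * D := by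
    have h := hmin β₀
    rw [← hf₀] at h
    have hlip := sqrt_lip β₀ βhat
    have hnorm : Real.sqrt (∑ j, (β₀ j - βhat j) ^ 2) = D := by
      rw [hD]
      congr 1
      exact Finset.sum_congr rfl fun j _ => by rw [hd]; ring
    rw [hnorm] at hlip
    linarith [mul_le_mul_of_nonneg_left hlip hLpos.le]
  -- Cauchy-Schwarz : ∑ S d ≤ s D
  have hcs : ∑ j, S j * d j ≤ s * D := by
    rw [hs, hD]; exact Real.sum_mul_le_sqrt_mul_sqrt _ _ _
  -- combine
  have hc0 : 0 < c := lt_trans one_pos hc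
  have hmain : (κ ^ 2 - L ^ 2) * D ^ 2 ≤ 2 * (1 / c + 1) * L * f₀ * D := by
    have h1 : fh ^ 2 ≤ (f₀ + L * D) ^ 2 := pow_le_pow_left₀ hfhnn hfhle 2
    have h2 : 2 * (f₀ * ∑ j, S j * d j) ≤ 2 * (f₀ * (s * D)) := by
      have := mul_le_mul_of_nonneg_left hcs hf₀pos.le
      linarith
    have h3 : 2 * (f₀ * (s * D)) ≤ 2 * (f₀ * (L / c * D)) := by
      have := mul_le_mul_of_nonneg_left
        (mul_le_mul_of_nonneg_right hsL hDnn) hf₀pos.le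
      linarith
    have hexpand : (f₀ + L * D) ^ 2 = f₀ ^ 2 + 2 * (f₀ * (L * D)) + L ^ 2 * D ^ 2 := by
      ring
    have hgoal : 2 * (f₀ * (L / c * D)) + 2 * (f₀ * (L * D))
        = 2 * (1 / c + 1) * L * f₀ * D := by
      field_simp
    linarith [hκD, hdecomp, h1, h2, h3, hexpand, hgoal]
  refine ⟨?_, hsecond⟩
  have hpos : 0 < κ ^ 2 - L ^ 2 := by linarith
  rw [le_div_iff₀ hpos]
  rcases eq_or_lt_of_le hDnn with h0 | h0
  · have : D = 0 := h0.symm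
    rw [this, zero_mul]
    positivity
  · have hstep : (D * (κ ^ 2 - L ^ 2)) * D ≤ (2 * (1 / c + 1) * L * f₀) * D := by
      nlinarith [hmain]
    have := (mul_le_mul_iff_of_pos_right h0).mp hstep
    linarith
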